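/- Let p ∈ (0, 1], let n ≥ 1, and let α₁, …, αₙ be nonzero reals and β₁, …, βₙ reals. Define f : ℝ → ℝ by f(x) = Σ_{i=1}^{n} |αᵢ x + βᵢ|^{p}. Then f is differentiable at every x ∉ { −βᵢ/αᵢ : 1 ≤ i ≤ n }, and f is not differentiable at each point x = −βⱼ/αⱼ (1 ≤ j ≤ n). -/

import Mathlib

open MeasureTheory Filter Topology

lemma key (p : ℝ) (hp0 : 0 < p) (hp1 : p ≤ 1) (c : ℝ) (hc : 0 < c) :
    ¬ DifferentiableAt ℝ (fun y : ℝ => c * |y| ^ p) 0 := by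
  rcases eq_or_lt_of_le hp1 with h1 | h1
  · -- p = 1
    subst h1
    simp only [Real.rpow_one]
    intro h
    have h2 : DifferentiableAt ℝ (fun y : ℝ => c⁻¹ * (c * |y|)) 0 := h.const_mul _
    have : (fun y : ℝ => c⁻¹ * (c * |y|)) = fun y : ℝ => |y| := by
      funext y; field_simp
    rw [this] at h2
    exact not_differentiableAt_abs_zero h2
  · intro h
    have hd := h.hasDerivAt
    rw [hasDerivAt_iff_tendsto_slope] at hd
    have hle : 𝓝[>] (0:ℝ) ≤ 𝓝[≠] (0:ℝ) :=
      nhdsWithin_mono _ (fun y hy => ne_of_gt hy)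
    have hd' : Tendsto (slope (fun y : ℝ => c * |y| ^ p) 0) (𝓝[>] 0)
        (𝓝 (deriv (fun y : ℝ => c * |y| ^ p) 0)) := hd.mono_left hle
    have heq : ∀ y ∈ Set.Ioi (0:ℝ),
        slope (fun y : ℝ => c * |y| ^ p) 0 y = c * (y⁻¹) ^ (1 - p) := by
      intro y hy
      have hy' : (0:ℝ) < y := hy
      rw [slope_def_field]
      field_simp [abs_of_pos hy', Real.zero_rpow (ne_of_gt hp0)]
      rw [one_div, Real.inv_rpow hy'.le, ← Real.rpow_neg hy'.le, neg_sub,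
        abs_of_pos hy', abs_zero, Real.zero_rpow (ne_of_gt hp0), sub_zero, sub_zero,
        Real.rpow_sub_one (ne_of_gt hy')]
    have htop : Tendsto (fun y : ℝ => c * (y⁻¹) ^ (1 - p)) (𝓝[>] 0) atTop := by
      apply Tendsto.const_mul_atTop hc
      exact (tendsto_rpow_atTop (by linarith)).comp tendsto_inv_nhdsGT_zero
    have : Tendsto (slope (fun y : ℝ => c * |y| ^ p) 0) (𝓝[>] 0) atTop :=
      htop.congr' (eventually_nhdsWithin_of_forall (fun y hy => (heq y hy).symm))
    exact not_tendsto_nhds_of_tendsto_atTop this _ hd'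

lemma key' (p : ℝ) (hp0 : 0 < p) (hp1 : p ≤ 1) (c : ℝ) (hc : 0 < c) (x0 : ℝ) :
    ¬ DifferentiableAt ℝ (fun y : ℝ => c * |y - x0| ^ p) x0 := by
  intro h
  have h' : DifferentiableAt ℝ (fun y : ℝ => c * |y - x0| ^ p) (0 + x0) := by
    rwa [zero_add]
  have hg : DifferentiableAt ℝ (fun y : ℝ => y + x0) 0 :=
    differentiableAt_id.add_const _
  have h2 := h'.comp 0 hg
  have : ((fun y : ℝ => c * |y - x0| ^ p) ∘ (fun y : ℝ => y + x0))
      = fun y : ℝ => c * |y| ^ p := by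
    funext y; simp
  rw [this] at h2
  exact key p hp0 hp1 c hc h2

/-- **Singularities of p-(quasi)norm Lagrangian descriptor sums.** For `p ∈ (0, 1]`,
`n ≥ 1`, nonzero reals `α₁, …, αₙ` and reals `β₁, …, βₙ`, the function
`f(x) = Σᵢ |αᵢ x + βᵢ|^p` is differentiable at every `x ∉ {-βᵢ/αᵢ}` and is not
differentiable at each point `x = -βⱼ/αⱼ`. -/
theorem sum_abs_rpow_differentiability
    (p : ℝ) (hp0 : 0 < p) (hp1 : p ≤ 1) (n : ℕ) (hn : 1 ≤ n)
    (α β : Fin n → ℝ) (hα : ∀ i, α i ≠ 0) :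
    (∀ x : ℝ, x ∉ Set.range (fun i => -β i / α i) →
      DifferentiableAt ℝ (fun y : ℝ => ∑ i, |α i * y + β i| ^ p) x) ∧
    (∀ j : Fin n,
      ¬ DifferentiableAt ℝ (fun y : ℝ => ∑ i, |α i * y + β i| ^ p) (-β j / α j)) := by
  constructor
  · intro x hx
    apply DifferentiableAt.fun_sum
    intro i _
    have hne : α i * x + β i ≠ 0 := by
      intro h0
      refine hx ⟨i, ?_⟩
      show -β i / α i = x
      rw [div_eq_iff (hα i)]; linarith
    have h1 : DifferentiableAt ℝ (fun y : ℝ => α i * y + β i) x :=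
      (differentiableAt_id.const_mul _).add_const _
    exact (h1.abs hne).rpow_const (Or.inl (abs_ne_zero.2 hne))
  · intro j hdiff
    set x0 : ℝ := -β j / α j with hx0
    set S : Finset (Fin n) := Finset.univ.filter (fun i => α i * x0 + β i = 0) with hS
    set c : ℝ := ∑ i ∈ S, |α i| ^ p with hc
    have hjS : j ∈ S := by
      simp only [hS, Finset.mem_filter, Finset.mem_univ, true_and, hx0]
      rw [mul_comm, div_mul_cancel₀ _ (hα j)]; ring
    have hcpos : 0 < c := by
      apply Finset.sum_pos' (fun i _ => Real.rpow_nonneg (abs_nonneg _) p)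
      exact ⟨j, hjS, Real.rpow_pos_of_pos (abs_pos.2 (hα j)) p⟩
    have hfeq : ∀ y : ℝ, (∑ i, |α i * y + β i| ^ p)
        = (∑ i ∈ Finset.univ.filter (fun i => ¬ (α i * x0 + β i = 0)),
            |α i * y + β i| ^ p) + c * |y - x0| ^ p := by
      intro y
      rw [← Finset.sum_filter_add_sum_filter_not Finset.univ
        (fun i => α i * x0 + β i = 0) (fun i => |α i * y + β i| ^ p), add_comm]
      congr 1
      rw [hc, Finset.sum_mul]
      apply Finset.sum_congr rfl
      intro i hi
      have hi' : α i * x0 + β i = 0 := by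
        simpa [hS] using hi
      have : α i * y + β i = α i * (y - x0) := by
        rw [mul_sub]; linarith [hi']
      rw [this, abs_mul, Real.mul_rpow (abs_nonneg _) (abs_nonneg _)]
    have hh : DifferentiableAt ℝ (fun y : ℝ =>
        ∑ i ∈ Finset.univ.filter (fun i => ¬ (α i * x0 + β i = 0)),
          |α i * y + β i| ^ p) x0 := by
      apply DifferentiableAt.fun_sum
      intro i hi
      have hne : α i * x0 + β i ≠ 0 := by
        simpa using (Finset.mem_filter.1 hi).2
      have h1 : DifferentiableAt ℝ (fun y : ℝ => α i * y + β i) x0 :=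
        (differentiableAt_id.const_mul _).add_const _
      exact (h1.abs hne).rpow_const (Or.inl (abs_ne_zero.2 hne))
    have hsub : DifferentiableAt ℝ (fun y : ℝ => c * |y - x0| ^ p) x0 := by
      have := hdiff.sub hh
      have heq : (fun y : ℝ => (∑ i, |α i * y + β i| ^ p)
          - ∑ i ∈ Finset.univ.filter (fun i => ¬ (α i * x0 + β i = 0)),
              |α i * y + β i| ^ p) = fun y : ℝ => c * |y - x0| ^ p := by
        funext y
        rw [hfeq y]; ring
      rw [← heq]; exact this
    exact key' p hp0 hp1 c hcpos x0 hsub
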